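/- Let β ∈ (1,2) be the d-Bonacci number, T_S the symmetric β-transformation on X_S = [-1/2, β/2-1) ∪ [1-β/2, 1/2), and T_B the balanced β-transformation on X_B = [(2-β)/(2β-2), β/(2β-2)). Define ψ: X_S → X_B by ψ(x) = x/(β-1) if x ∈ [1-β/2, 1/2) and ψ(x) = (x+1)/(β-1) if x ∈ [-1/2, β/2-1). Then ψ is a bijection from X_S to X_B and ψ ∘ T_S = T_B ∘ ψ. -/

import Mathlib

set_option maxHeartbeats 2000000 in
/-- The map `ψ` is a bijection from `X_S` onto `X_B` conjugating the symmetric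
β-transformation `T_S` to the balanced β-transformation `T_B`. -/
theorem psi_conjugacy (d : ℕ) (hd : 2 ≤ d) (β : ℝ) (h1 : 1 < β) (h2 : β < 2)
    (hβ : β ^ d = ∑ i ∈ Finset.range d, β ^ i)
    (TS TB ψ : ℝ → ℝ)
    (hTS : ∀ x, TS x = β * x - (⌊β * x + 1/2⌋ : ℤ))
    (hTB : ∀ x, TB x = if 1/(2*β - 2) ≤ x then β * x - 1 else β * x)
    (hψ : ∀ x, ψ x = if x < β/2 - 1 then (x + 1)/(β - 1) else x/(β - 1)) :
    Set.BijOn ψ (Set.Ico (-(1 : ℝ)/2) (β/2 - 1) ∪ Set.Ico (1 - β/2) (1/2 : ℝ))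
      (Set.Ico ((2 - β)/(2*β - 2)) (β/(2*β - 2))) ∧
    ∀ x ∈ Set.Ico (-(1 : ℝ)/2) (β/2 - 1) ∪ Set.Ico (1 - β/2) (1/2 : ℝ),
      ψ (TS x) = TB (ψ x) := by
  have hb0 : (0:ℝ) < β := by linarith
  have hb1 : (0:ℝ) < β - 1 := by linarith
  have hb2 : (0:ℝ) < 2*β - 2 := by linarith
  refine ⟨⟨?_, ?_, ?_⟩, ?_⟩
  · -- MapsTo
    rintro x (⟨hx1, hx2⟩ | ⟨hx1, hx2⟩)
    · rw [hψ, if_pos hx2]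
      refine ⟨?_, ?_⟩
      · rw [div_le_div_iff₀ hb2 hb1]; nlinarith
      · rw [div_lt_div_iff₀ hb1 hb2]; nlinarith
    · rw [hψ, if_neg (not_lt.mpr (by linarith))]
      refine ⟨?_, ?_⟩
      · rw [div_le_div_iff₀ hb2 hb1]; nlinarith
      · rw [div_lt_div_iff₀ hb1 hb2]; nlinarith
  · -- InjOn
    rintro x hx y hy hxy
    rw [hψ x, hψ y] at hxy
    rcases hx with ⟨hx1, hx2⟩ | ⟨hx1, hx2⟩ <;> rcases hy with ⟨hy1, hy2⟩ | ⟨hy1, hy2⟩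
    · rw [if_pos hx2, if_pos hy2, div_eq_div_iff (ne_of_gt hb1) (ne_of_gt hb1)] at hxy
      have := mul_right_cancel₀ (ne_of_gt hb1) hxy
      linarith
    · rw [if_pos hx2, if_neg (not_lt.mpr (by linarith)), div_eq_div_iff (ne_of_gt hb1) (ne_of_gt hb1)] at hxy
      have := mul_right_cancel₀ (ne_of_gt hb1) hxy
      exfalso; linarith
    · rw [if_neg (not_lt.mpr (by linarith)), if_pos hy2, div_eq_div_iff (ne_of_gt hb1) (ne_of_gt hb1)] at hxy
      have := mul_right_cancel₀ (ne_of_gt hb1) hxy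
      exfalso; linarith
    · rw [if_neg (not_lt.mpr (by linarith)), if_neg (not_lt.mpr (by linarith)),
        div_eq_div_iff (ne_of_gt hb1) (ne_of_gt hb1)] at hxy
      exact mul_right_cancel₀ (ne_of_gt hb1) hxy
  · -- SurjOn
    rintro y ⟨hy1, hy2⟩
    rw [div_le_iff₀ hb2] at hy1
    rw [lt_div_iff₀ hb2] at hy2
    by_cases h : y < 1/(2*β - 2)
    · rw [lt_div_iff₀ hb2] at h
      refine ⟨y*(β-1), Or.inr ⟨by nlinarith, by nlinarith⟩, ?_⟩
      rw [hψ, if_neg (not_lt.mpr (by nlinarith))]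
      field_simp
    · push_neg at h
      rw [div_le_iff₀ hb2] at h
      refine ⟨y*(β-1) - 1, Or.inl ⟨by nlinarith, by nlinarith⟩, ?_⟩
      rw [hψ, if_pos (by nlinarith)]
      field_simp
      ring
  · -- conjugacy
    rintro x (⟨hx1, hx2⟩ | ⟨hx1, hx2⟩)
    · -- left interval: ψ x = (x+1)/(β-1), TB branch with digit 1
      rw [hψ x, if_pos hx2, hTB,
        if_pos (by rw [div_le_div_iff₀ hb2 hb1]; nlinarith)]
      by_cases hc : 0 ≤ β * x + 1/2
      · have hfl : ⌊β * x + 1/2⌋ = 0 := by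
          rw [Int.floor_eq_zero_iff, Set.mem_Ico]
          exact ⟨hc, by nlinarith⟩
        have hT : TS x = β * x := by rw [hTS, hfl]; push_cast; ring
        rw [hT, hψ, if_pos (by nlinarith)]
        field_simp
        ring
      · push_neg at hc
        have hfl : ⌊β * x + 1/2⌋ = -1 := by
          rw [Int.floor_eq_iff]
          constructor <;> push_cast <;> nlinarith
        have hT : TS x = β * x + 1 := by rw [hTS, hfl]; push_cast; ring
        rw [hT, hψ, if_neg (not_lt.mpr (by nlinarith))]
        field_simp
        ring
    · -- right interval: ψ x = x/(β-1), TB branch with digit 0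
      rw [hψ x, if_neg (not_lt.mpr (by linarith)), hTB,
        if_neg (not_le.mpr (by rw [div_lt_div_iff₀ hb1 hb2]; nlinarith))]
      by_cases hc : 1 ≤ β * x + 1/2
      · have hfl : ⌊β * x + 1/2⌋ = 1 := by
          rw [Int.floor_eq_iff]
          constructor <;> push_cast <;> nlinarith
        have hT : TS x = β * x - 1 := by rw [hTS, hfl]; push_cast; ring
        rw [hT, hψ, if_pos (by nlinarith)]
        field_simp
        ring
      · push_neg at hc
        have hfl : ⌊β * x + 1/2⌋ = 0 := by
          rw [Int.floor_eq_zero_iff, Set.mem_Ico]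
          exact ⟨by
            linarith [mul_pos hb0 (show (0:ℝ) < 1 - β/2 by linarith),
              mul_le_mul_of_nonneg_left hx1 hb0.le], by linarith⟩
        have hT : TS x = β * x := by rw [hTS, hfl]; push_cast; ring
        have hcond : ¬ (β * x < β / 2 - 1) := by
          push_neg
          linarith [mul_pos hb0 (show (0:ℝ) < 1 - β/2 by linarith),
            mul_le_mul_of_nonneg_left hx1 hb0.le]
        rw [hT, hψ, if_neg hcond, mul_div_assoc]
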